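/- Let G be a group, k a positive natural number, and s : Fin k → G. Then for all natural numbers m and n, the Shannon entropies of the random walk distributions satisfy H(m + n) ≤ H(m) + H(n): the entropy sequence of the simple random walk on a marked group is subadditive. -/

import Mathlib

/-- The `n`-step distribution of the simple random walk on the marked group `(G, s)`. -/
noncomputable def rwDist {G : Type*} [Group G] {k : ℕ} (s : Fin k → G) (n : ℕ) (g : G) : ℝ :=
  (Nat.card {w : Fin n → Fin k | (List.ofFn (fun i => s (w i))).prod = g} : ℝ) / k ^ n

/-- The Shannon entropy of the `n`-step distribution of the simple random walk
on the marked group `(G, s)`. -/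
noncomputable def rwEntropy {G : Type*} [Group G] {k : ℕ} (s : Fin k → G) (n : ℕ) : ℝ :=
  ∑' g : G, Real.negMulLog (rwDist s n g)

open Finset Real

section aux
variable {G : Type*} [Group G] {k : ℕ} (s : Fin k → G)

/-- word product -/
def rwF (n : ℕ) (w : Fin n → Fin k) : G := (List.ofFn fun i => s (w i)).prod

open Classical in
/-- number of words of length n with product g -/
noncomputable def rwCnt (n : ℕ) (g : G) : ℕ :=
  (Finset.univ.filter fun w : Fin n → Fin k => rwF s n w = g).card

open Classical in
noncomputable def rwSupp (n : ℕ) : Finset G :=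
  Finset.image (rwF s n) Finset.univ

lemma rwDist_eq (n : ℕ) (g : G) : rwDist s n g = (rwCnt s n g : ℝ) / k ^ n := by
  classical
  unfold rwDist rwCnt rwF
  congr 2
  rw [Nat.card_eq_fintype_card]
  simp [Fintype.card_subtype]

end aux
section aux2
variable {G : Type*} [Group G] {k : ℕ} (s : Fin k → G)

lemma rwDist_nonneg (n : ℕ) (g : G) : 0 ≤ rwDist s n g := by
  rw [rwDist_eq]; positivity

lemma rwDist_le_one (n : ℕ) (g : G) : rwDist s n g ≤ 1 := by
  classical
  rw [rwDist_eq]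
  rcases Nat.eq_zero_or_pos k with hk | hk
  · subst hk
    rcases Nat.eq_zero_or_pos n with hn | hn
    · subst hn
      have : rwCnt s 0 g ≤ 1 := by
        unfold rwCnt
        calc (Finset.univ.filter fun w : Fin 0 → Fin 0 => rwF s 0 w = g).card
            ≤ (Finset.univ : Finset (Fin 0 → Fin 0)).card := Finset.card_filter_le _ _
          _ = 1 := by simp
      simpa using by exact_mod_cast this
    · rw [show ((0:ℕ):ℝ) ^ n = 0 by
        simp [zero_pow hn.ne']]
      simp
  · rw [div_le_one (by positivity)]
    have : rwCnt s n g ≤ k ^ n := by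
      unfold rwCnt
      calc (Finset.univ.filter fun w : Fin n → Fin k => rwF s n w = g).card
          ≤ (Finset.univ : Finset (Fin n → Fin k)).card := Finset.card_filter_le _ _
        _ = k ^ n := by simp
    exact_mod_cast this

lemma rwDist_eq_zero {n : ℕ} {g : G} (hg : g ∉ rwSupp s n) : rwDist s n g = 0 := by
  classical
  rw [rwDist_eq]
  have : rwCnt s n g = 0 := by
    unfold rwCnt
    rw [Finset.card_eq_zero, Finset.filter_eq_empty_iff]
    intro w _
    exact fun hw => hg (Finset.mem_image.mpr ⟨w, Finset.mem_univ w, hw⟩)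
  simp [this]

lemma sum_rwDist (hk : 0 < k) (n : ℕ) : ∑ g ∈ rwSupp s n, rwDist s n g = 1 := by
  classical
  have hcard : ∑ g ∈ rwSupp s n, (rwCnt s n g : ℝ) = (k : ℝ) ^ n := by
    have := Finset.card_eq_sum_card_image (rwF s n) (Finset.univ : Finset (Fin n → Fin k))
    have hc : (Finset.univ : Finset (Fin n → Fin k)).card = k ^ n := by simp
    rw [hc] at this
    rw [← Nat.cast_pow, this]
    push_cast [rwSupp, rwCnt]
    rfl
  simp only [rwDist_eq]
  rw [← Finset.sum_div, hcard, div_self (by positivity)]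

lemma rwEntropy_eq (n : ℕ) :
    rwEntropy s n = ∑ g ∈ rwSupp s n, Real.negMulLog (rwDist s n g) := by
  classical
  apply tsum_eq_sum
  intro g hg
  rw [rwDist_eq_zero s hg, Real.negMulLog_zero]

end aux2
section aux3
variable {G : Type*} [Group G] {k : ℕ} (s : Fin k → G)

lemma rwF_split (m n : ℕ) (w : Fin (m + n) → Fin k) :
    rwF s (m + n) w = rwF s m (fun i => w (Fin.castAdd n i)) *
      rwF s n (fun j => w (Fin.natAdd m j)) := by
  unfold rwF
  rw [List.ofFn_add, List.prod_append]
  rfl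

open Classical in
lemma rwCnt_conv (m n : ℕ) (g : G) :
    rwCnt s (m + n) g = ∑ a ∈ rwSupp s m, rwCnt s m a * rwCnt s n (a⁻¹ * g) := by
  classical
  -- step 1: count pairs
  have h1 : rwCnt s (m + n) g =
      (Finset.univ.filter fun p : (Fin m → Fin k) × (Fin n → Fin k) =>
        rwF s m p.1 * rwF s n p.2 = g).card := by
    unfold rwCnt
    apply Finset.card_bij' (fun w _ => ((fun i => w (Fin.castAdd n i)),
        (fun j => w (Fin.natAdd m j)))) (fun p _ => Fin.append p.1 p.2)
    · intro w hw
      simp only [Finset.mem_filter, Finset.mem_univ, true_and] at hw ⊢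
      rw [← rwF_split]; exact hw
    · intro p hp
      simp only [Finset.mem_filter, Finset.mem_univ, true_and] at hp ⊢
      rw [rwF_split]
      simpa using hp
    · intro w _
      exact Fin.append_castAdd_natAdd
    · intro p _
      ext i <;> simp
  rw [h1]
  -- step 2: fiber the pair count
  have h2 : ∀ u : Fin m → Fin k, ∀ v : Fin n → Fin k,
      (∑ a ∈ rwSupp s m, (if rwF s m u = a then 1 else 0) *
        (if rwF s n v = a⁻¹ * g then 1 else 0)) =
      (if rwF s m u * rwF s n v = g then 1 else 0) := by
    intro u v
    have hmem : rwF s m u ∈ rwSupp s m :=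
      Finset.mem_image.mpr ⟨u, Finset.mem_univ u, rfl⟩
    calc (∑ a ∈ rwSupp s m, (if rwF s m u = a then 1 else 0) *
          (if rwF s n v = a⁻¹ * g then 1 else 0))
        = ∑ a ∈ rwSupp s m, (if a = rwF s m u then
            (if rwF s n v = a⁻¹ * g then 1 else 0) else 0) := by
          apply Finset.sum_congr rfl
          intro a _
          rw [boole_mul]
          simp [eq_comm]
      _ = if rwF s n v = (rwF s m u)⁻¹ * g then 1 else 0 := by
          rw [Finset.sum_ite_eq' (rwSupp s m) (rwF s m u)]
          simp [hmem]
      _ = if rwF s m u * rwF s n v = g then 1 else 0 := by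
          congr 1
          simp [eq_inv_mul_iff_mul_eq]
  rw [Finset.card_filter, Fintype.sum_prod_type]
  simp only [rwCnt, Finset.card_filter]
  calc (∑ u : Fin m → Fin k, ∑ v : Fin n → Fin k,
          if rwF s m u * rwF s n v = g then 1 else 0)
      = ∑ u : Fin m → Fin k, ∑ v : Fin n → Fin k, ∑ a ∈ rwSupp s m,
          (if rwF s m u = a then 1 else 0) * (if rwF s n v = a⁻¹ * g then 1 else 0) := by
        simp_rw [h2]
    _ = ∑ u : Fin m → Fin k, ∑ a ∈ rwSupp s m, ∑ v : Fin n → Fin k,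
          (if rwF s m u = a then 1 else 0) * (if rwF s n v = a⁻¹ * g then 1 else 0) :=
        Finset.sum_congr rfl fun u _ => Finset.sum_comm
    _ = ∑ a ∈ rwSupp s m, ∑ u : Fin m → Fin k, ∑ v : Fin n → Fin k,
          (if rwF s m u = a then 1 else 0) * (if rwF s n v = a⁻¹ * g then 1 else 0) :=
        Finset.sum_comm
    _ = ∑ a ∈ rwSupp s m, (∑ u : Fin m → Fin k, if rwF s m u = a then 1 else 0) *
          (∑ v : Fin n → Fin k, if rwF s n v = a⁻¹ * g then 1 else 0) := by
        refine Finset.sum_congr rfl fun a _ => ?_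
        rw [Finset.sum_mul_sum]

end aux3
section aux4
variable {G : Type*} [Group G] {k : ℕ} (s : Fin k → G)

open Classical in
lemma rwDist_conv (_hk : 0 < k) (m n : ℕ) (g : G) :
    rwDist s (m + n) g = ∑ a ∈ rwSupp s m, rwDist s m a * rwDist s n (a⁻¹ * g) := by
  classical
  simp only [rwDist_eq]
  rw [rwCnt_conv]
  push_cast
  rw [Finset.sum_div]
  refine Finset.sum_congr rfl fun a _ => ?_
  rw [pow_add, div_mul_div_comm]

lemma negMulLog_sum_le {ι : Type*} (t : Finset ι) (x : ι → ℝ) (hx : ∀ i ∈ t, 0 ≤ x i) :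
    Real.negMulLog (∑ i ∈ t, x i) ≤ ∑ i ∈ t, Real.negMulLog (x i) := by
  set S := ∑ i ∈ t, x i with hS
  have hS0 : 0 ≤ S := Finset.sum_nonneg hx
  rcases hS0.eq_or_lt with h | h
  · have : ∀ i ∈ t, x i = 0 := by
      intro i hi
      exact le_antisymm (by
        have := (Finset.sum_eq_zero_iff_of_nonneg hx).mp h.symm
        exact le_of_eq (this i hi)) (hx i hi)
    rw [← h, Real.negMulLog_zero]
    refine Finset.sum_nonneg fun i hi => ?_
    rw [this i hi, Real.negMulLog_zero]
  · have : Real.negMulLog S = ∑ i ∈ t, (-(x i) * Real.log S) := by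
      rw [← Finset.sum_mul, Finset.sum_neg_distrib, Real.negMulLog, hS]
    rw [this]
    refine Finset.sum_le_sum fun i hi => ?_
    rcases (hx i hi).eq_or_lt with h0 | h0
    · rw [← h0]; simp [Real.negMulLog]
    · have hle : x i ≤ S := Finset.single_le_sum hx hi
      have : Real.log (x i) ≤ Real.log S := Real.log_le_log h0 hle
      rw [Real.negMulLog, neg_mul]
      nlinarith
end aux4
section aux5
variable {G : Type*} [Group G] {k : ℕ} (s : Fin k → G)

lemma sum_rwDist_le (hk : 0 < k) (n : ℕ) (D : Finset G) :
    ∑ h ∈ D, rwDist s n h ≤ 1 := by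
  classical
  calc ∑ h ∈ D, rwDist s n h
      ≤ ∑ h ∈ D ∪ rwSupp s n, rwDist s n h :=
        Finset.sum_le_sum_of_subset_of_nonneg Finset.subset_union_left
          (fun x _ _ => rwDist_nonneg s n x)
    _ = ∑ h ∈ rwSupp s n, rwDist s n h :=
        (Finset.sum_subset Finset.subset_union_right
          (fun x _ hx => rwDist_eq_zero s hx)).symm
    _ = 1 := sum_rwDist s hk n

lemma sum_negMulLog_rwDist_le (n : ℕ) (D : Finset G) :
    ∑ h ∈ D, Real.negMulLog (rwDist s n h) ≤ rwEntropy s n := by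
  classical
  rw [rwEntropy_eq]
  calc ∑ h ∈ D, Real.negMulLog (rwDist s n h)
      ≤ ∑ h ∈ D ∪ rwSupp s n, Real.negMulLog (rwDist s n h) :=
        Finset.sum_le_sum_of_subset_of_nonneg Finset.subset_union_left
          (fun x _ _ => Real.negMulLog_nonneg (rwDist_nonneg s n x) (rwDist_le_one s n x))
    _ = ∑ h ∈ rwSupp s n, Real.negMulLog (rwDist s n h) :=
        (Finset.sum_subset Finset.subset_union_right
          (fun x _ hx => by rw [rwDist_eq_zero s hx, Real.negMulLog_zero])).symm

end aux5

/-- The entropy sequence of the simple random walk on a marked group is subadditive: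
`H(m + n) ≤ H(m) + H(n)`. -/
theorem rwEntropy_subadditive {G : Type*} [Group G] (k : ℕ) (hk : 0 < k)
    (s : Fin k → G) (m n : ℕ) :
    rwEntropy s (m + n) ≤ rwEntropy s m + rwEntropy s n := by
  classical
  rw [rwEntropy_eq s (m + n)]
  set A := rwSupp s m with hA
  set B := rwSupp s (m + n) with hB
  calc ∑ g ∈ B, Real.negMulLog (rwDist s (m + n) g)
      ≤ ∑ g ∈ B, ∑ a ∈ A, Real.negMulLog (rwDist s m a * rwDist s n (a⁻¹ * g)) := by
        refine Finset.sum_le_sum fun g _ => ?_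
        rw [rwDist_conv s hk m n g]
        exact negMulLog_sum_le _ _ fun a _ =>
          mul_nonneg (rwDist_nonneg _ _ _) (rwDist_nonneg _ _ _)
    _ = ∑ a ∈ A, ∑ g ∈ B, (rwDist s n (a⁻¹ * g) * Real.negMulLog (rwDist s m a)
          + rwDist s m a * Real.negMulLog (rwDist s n (a⁻¹ * g))) := by
        rw [Finset.sum_comm]
        simp_rw [Real.negMulLog_mul]
    _ = ∑ a ∈ A, ((∑ g ∈ B, rwDist s n (a⁻¹ * g)) * Real.negMulLog (rwDist s m a)
          + rwDist s m a * ∑ g ∈ B, Real.negMulLog (rwDist s n (a⁻¹ * g))) := by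
        refine Finset.sum_congr rfl fun a _ => ?_
        rw [Finset.sum_add_distrib, Finset.sum_mul, Finset.mul_sum]
    _ ≤ ∑ a ∈ A, (Real.negMulLog (rwDist s m a) + rwDist s m a * rwEntropy s n) := by
        refine Finset.sum_le_sum fun a _ => ?_
        have h1 : (∑ g ∈ B, rwDist s n (a⁻¹ * g)) * Real.negMulLog (rwDist s m a)
            ≤ 1 * Real.negMulLog (rwDist s m a) := by
          apply mul_le_mul_of_nonneg_right
          · calc ∑ g ∈ B, rwDist s n (a⁻¹ * g)
                = ∑ h ∈ B.image (fun g => a⁻¹ * g), rwDist s n h :=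
                  (Finset.sum_image (fun x _ y _ h => by simpa using h)).symm
              _ ≤ 1 := sum_rwDist_le s hk n _
          · exact Real.negMulLog_nonneg (rwDist_nonneg _ _ _) (rwDist_le_one _ _ _)
        have h2 : rwDist s m a * ∑ g ∈ B, Real.negMulLog (rwDist s n (a⁻¹ * g))
            ≤ rwDist s m a * rwEntropy s n := by
          apply mul_le_mul_of_nonneg_left _ (rwDist_nonneg _ _ _)
          calc ∑ g ∈ B, Real.negMulLog (rwDist s n (a⁻¹ * g))
              = ∑ h ∈ B.image (fun g => a⁻¹ * g), Real.negMulLog (rwDist s n h) :=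
                (Finset.sum_image (f := fun h => Real.negMulLog (rwDist s n h))
                  (g := fun g => a⁻¹ * g) (fun x _ y _ h => by simpa using h)).symm
            _ ≤ rwEntropy s n := sum_negMulLog_rwDist_le s n _
        linarith
    _ = rwEntropy s m + rwEntropy s n := by
        rw [Finset.sum_add_distrib, ← Finset.sum_mul, sum_rwDist s hk m, one_mul,
          ← rwEntropy_eq]
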